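/- For all positive integers n, sum over p from 0 to n of binom(n,p) * 2*p * binom(2(n-p), 2) * (2p-1)!! * (2(n-p-1)-1)!! equals (2n)!! * 2*n*(n-1)/8, where terms with n-p-1 < 0 are taken to be zero. -/

import Mathlib

open Finset

noncomputable def cb (p : ℕ) : ℚ := (Nat.centralBinom p : ℚ)

lemma cb_rec (p : ℕ) : ((p : ℚ) + 1) * cb (p + 1) = 2 * (2 * p + 1) * cb p := by
  have h := Nat.succ_mul_centralBinom_succ p
  have : ((p + 1) * Nat.centralBinom (p + 1) : ℚ) = ((2 * (2 * p + 1) * Nat.centralBinom p : ℕ) : ℚ) := by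
    exact_mod_cast congrArg (Nat.cast : ℕ → ℚ) h
  push_cast at this
  simpa [cb] using this

noncomputable def Bc (n : ℕ) : ℚ := ∑ p ∈ range (n + 1), cb p * cb (n - p)

lemma Dsym (n : ℕ) : ∑ p ∈ range (n + 1), (p : ℚ) * (cb p * cb (n - p)) = n * Bc n / 2 := by
  have h := Finset.sum_range_reflect (fun j => (j : ℚ) * (cb j * cb (n - j))) (n + 1)
  have h2 : ∑ j ∈ range (n + 1), ((n - j : ℕ) : ℚ) * (cb (n - j) * cb j)
      = ∑ j ∈ range (n + 1), (j : ℚ) * (cb j * cb (n - j)) := by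
    simp only [Nat.add_sub_cancel] at h
    rw [← h]
    refine Finset.sum_congr rfl fun j hj => ?_
    have hj' : j ≤ n := by simpa [Nat.lt_succ_iff] using hj
    rw [Nat.sub_sub_self hj']
  have h3 : (∑ j ∈ range (n + 1), (j : ℚ) * (cb j * cb (n - j))) * 2
      = ∑ j ∈ range (n + 1), (n : ℚ) * (cb j * cb (n - j)) := by
    rw [mul_two (∑ j ∈ range (n + 1), (j : ℚ) * (cb j * cb (n - j)))]
    nth_rewrite 2 [← h2]
    rw [← Finset.sum_add_distrib]
    refine Finset.sum_congr rfl fun j hj => ?_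
    have hj' : j ≤ n := by simpa [Nat.lt_succ_iff] using hj
    have : ((n - j : ℕ) : ℚ) = (n : ℚ) - j := by
      rw [Nat.cast_sub hj']
    rw [this]
    ring
  rw [← Finset.mul_sum] at h3
  unfold Bc
  linarith [h3]

lemma Bval (n : ℕ) : Bc n = 4 ^ n := by
  induction n with
  | zero => simp [Bc, cb, Nat.centralBinom]
  | succ n ih =>
    have hd := Dsym (n + 1)
    have hshift : ∑ q ∈ range (n + 2), (q : ℚ) * (cb q * cb (n + 1 - q))
        = ∑ p ∈ range (n + 1), ((p : ℚ) + 1) * (cb (p + 1) * cb (n - p)) := by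
      rw [Finset.sum_range_succ' (fun q => (q : ℚ) * (cb q * cb (n + 1 - q))) (n + 1)]
      simp
    have hterm : ∑ p ∈ range (n + 1), ((p : ℚ) + 1) * (cb (p + 1) * cb (n - p))
        = ∑ p ∈ range (n + 1), 2 * (2 * p + 1) * (cb p * cb (n - p)) := by
      refine Finset.sum_congr rfl fun p hp => ?_
      have := cb_rec p
      calc ((p : ℚ) + 1) * (cb (p + 1) * cb (n - p))
          = (((p : ℚ) + 1) * cb (p + 1)) * cb (n - p) := by ring
        _ = (2 * (2 * p + 1) * cb p) * cb (n - p) := by rw [this]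
        _ = 2 * (2 * p + 1) * (cb p * cb (n - p)) := by ring
    have hsplit : ∑ p ∈ range (n + 1), 2 * (2 * (p : ℚ) + 1) * (cb p * cb (n - p))
        = 4 * (∑ p ∈ range (n + 1), (p : ℚ) * (cb p * cb (n - p))) + 2 * Bc n := by
      unfold Bc
      rw [Finset.mul_sum, Finset.mul_sum, ← Finset.sum_add_distrib]
      refine Finset.sum_congr rfl fun p hp => ?_
      ring
    have hdn := Dsym n
    have key : ((n : ℚ) + 1) * Bc (n + 1) / 2 = 2 * ((n : ℚ) + 1) * Bc n := by
      rw [show ((n : ℚ) + 1) * Bc (n + 1) / 2 = ((n + 1 : ℕ) : ℚ) * Bc (n + 1) / 2 by push_cast; ring]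
      rw [← hd, hshift, hterm, hsplit, hdn]
      ring
    have hne : ((n : ℚ) + 1) ≠ 0 := by positivity
    have : Bc (n + 1) = 4 * Bc n := by
      field_simp at key
      rcases mul_left_cancel₀ hne (by rw [key]; ring : ((n:ℚ)+1) * Bc (n+1) = ((n:ℚ)+1) * (4 * Bc n)) with h
      exact h
    rw [this, ih]
    ring



lemma oddDF : ∀ k : ℕ, Nat.doubleFactorial (2 * k + 1) * 2 ^ (k + 1)
    = Nat.centralBinom (k + 1) * (k + 1).factorial := by
  intro k
  induction k with
  | zero => decide
  | succ k ih =>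
    have e : 2 * (k + 1) + 1 = (2 * k + 1) + 2 := by ring
    rw [e, Nat.doubleFactorial_add_two]
    have hc := Nat.succ_mul_centralBinom_succ (k + 1)
    calc (2 * k + 1 + 2) * Nat.doubleFactorial (2 * k + 1) * 2 ^ (k + 1 + 1)
        = (2 * (2 * (k + 1)) + 2) * (Nat.doubleFactorial (2 * k + 1) * 2 ^ (k + 1)) := by ring
      _ = (2 * (2 * (k + 1)) + 2) * (Nat.centralBinom (k + 1) * (k + 1).factorial) := by rw [ih]
      _ = ((k + 1 + 1) * Nat.centralBinom (k + 1 + 1)) * (k + 1).factorial := by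
          rw [hc]; ring
      _ = Nat.centralBinom (k + 2) * (k + 2).factorial := by
          rw [show (k + 2).factorial = (k + 2) * (k + 1).factorial from rfl]; ring

lemma dfq (p : ℕ) : ((Nat.doubleFactorial (2 * p - 1) : ℚ)) * 2 ^ p = cb p * (p.factorial : ℚ) := by
  cases p with
  | zero => simp [cb, Nat.centralBinom, Nat.doubleFactorial]
  | succ k =>
    have e : 2 * (k + 1) - 1 = 2 * k + 1 := by omega
    rw [e]
    simp only [cb]
    exact_mod_cast congrArg (Nat.cast : ℕ → ℚ) (oddDF k)

lemma chooseTwo (m : ℕ) : ((2 * m).choose 2 : ℚ) = (m : ℚ) * (2 * m - 1) := by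
  cases m with
  | zero => simp
  | succ k =>
    have h : (2 * (k + 1)).choose 2 = (k + 1) * (2 * k + 1) := by
      rw [Nat.choose_two_right]
      have h1 : 2 * (k + 1) - 1 = 2 * k + 1 := by omega
      rw [h1]
      have h2 : 2 * (k + 1) * (2 * k + 1) = 2 * ((k + 1) * (2 * k + 1)) := by ring
      rw [h2, Nat.mul_div_cancel_left _ (by norm_num : 0 < 2)]
    rw [h]
    push_cast
    ring


noncomputable def Fc (n : ℕ) : ℚ := ∑ p ∈ range (n + 1), (p : ℚ) * ((n - p : ℕ) : ℚ) * (cb p * cb (n - p))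

lemma Fval : ∀ n : ℕ, Fc n = 4 ^ n * n * ((n : ℚ) - 1) / 8 := by
  intro n
  induction n using Nat.strong_induction_on with
  | _ n ih =>
    match n with
    | 0 => simp [Fc]
    | 1 =>
      rw [Fc]
      rw [Finset.sum_range_succ, Finset.sum_range_succ]
      norm_num
    | (k + 2) =>
      have hk := ih k (by omega)
      have h1 : Fc (k + 2) = ∑ j ∈ range (k + 2),
          ((j : ℚ) + 1) * ((k + 2 - (j + 1) : ℕ) : ℚ) * (cb (j + 1) * cb (k + 2 - (j + 1))) := by
        rw [Fc, Finset.sum_range_succ'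
          (fun p => (p : ℚ) * ((k + 2 - p : ℕ) : ℚ) * (cb p * cb (k + 2 - p))) (k + 2)]
        push_cast
        simp
      have h2 : Fc (k + 2) = ∑ j ∈ range (k + 1),
          ((j : ℚ) + 1) * ((k + 1 - j : ℕ) : ℚ) * (cb (j + 1) * cb (k + 1 - j)) := by
        rw [h1, Finset.sum_range_succ]
        simp
      have h3 : Fc (k + 2) = ∑ j ∈ range (k + 1),
          (16 * ((j : ℚ) * ((k - j : ℕ) : ℚ) * (cb j * cb (k - j)))
            + 4 * (2 * k + 1) * (cb j * cb (k - j))) := by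
        rw [h2]
        refine Finset.sum_congr rfl fun j hj => ?_
        have hj' : j ≤ k := by simpa [Nat.lt_succ_iff] using hj
        have e1 : k + 1 - j = (k - j) + 1 := by omega
        rw [e1]
        have r1 := cb_rec j
        have r2 := cb_rec (k - j)
        have hcast : ((k - j : ℕ) : ℚ) = (k : ℚ) - j := by rw [Nat.cast_sub hj']
        push_cast
        rw [hcast] at r2 ⊢
        calc ((j : ℚ) + 1) * ((k : ℚ) - j + 1) * (cb (j + 1) * cb (k - j + 1))
            = (((j : ℚ) + 1) * cb (j + 1)) * ((((k : ℚ) - j) + 1) * cb (k - j + 1)) := by ring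
          _ = (2 * (2 * (j : ℚ) + 1) * cb j) * (2 * (2 * ((k : ℚ) - j) + 1) * cb (k - j)) := by
              rw [r1, r2]
          _ = 16 * ((j : ℚ) * ((k : ℚ) - j) * (cb j * cb (k - j)))
              + 4 * (2 * (k : ℚ) + 1) * (cb j * cb (k - j)) := by ring
      rw [h3, Finset.sum_add_distrib, ← Finset.mul_sum, ← Finset.mul_sum, ← Fc, ← Bc,
        hk, Bval]
      push_cast
      ring


lemma termEq (n p : ℕ) (hp : p ∈ range (n + 1)) :
    (Nat.choose n p : ℚ) * (2 * p) * Nat.choose (2 * (n - p)) 2 *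
        Nat.doubleFactorial (2 * p - 1) * Nat.doubleFactorial (2 * (n - p - 1) - 1)
      = (n.factorial : ℚ) * 2 / 2 ^ n * ((p : ℚ) * ((n - p : ℕ) : ℚ) * (cb p * cb (n - p))) := by
  have hpn : p ≤ n := by simpa [Nat.lt_succ_iff] using hp
  rcases Nat.eq_zero_or_pos p with h0 | hp1
  · subst h0; simp
  rcases eq_or_lt_of_le hpn with he | hlt
  · subst he; simp
  · obtain ⟨a, rfl⟩ : ∃ a, p = a + 1 := ⟨p - 1, by omega⟩
    obtain ⟨b, hb⟩ : ∃ b, n = a + b + 2 := ⟨n - a - 2, by omega⟩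
    subst hb
    have e1 : a + b + 2 - (a + 1) = b + 1 := by omega
    have e2 : a + b + 2 - (a + 1) - 1 = b := by omega
    rw [e1, show b + 1 - 1 = b from rfl]
    -- key facts
    have h2a : ((2 : ℚ)) ^ (a + 1) ≠ 0 := by positivity
    have h2b : ((2 : ℚ)) ^ b ≠ 0 := by positivity
    have hfa : ((a + 1).factorial : ℚ) ≠ 0 := by exact_mod_cast (a + 1).factorial_ne_zero
    have hfb : ((b + 1).factorial : ℚ) ≠ 0 := by exact_mod_cast (b + 1).factorial_ne_zero
    have hd1 : ((Nat.doubleFactorial (2 * (a + 1) - 1) : ℚ))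
        = cb (a + 1) * ((a + 1).factorial : ℚ) / 2 ^ (a + 1) := by
      rw [eq_div_iff h2a]; exact dfq (a + 1)
    have hd2 : ((Nat.doubleFactorial (2 * b - 1) : ℚ))
        = cb b * (b.factorial : ℚ) / 2 ^ b := by
      rw [eq_div_iff h2b]; exact dfq b
    have hch : ((a + b + 2).choose (a + 1) : ℚ)
        = ((a + b + 2).factorial : ℚ) / (((a + 1).factorial : ℚ) * ((b + 1).factorial : ℚ)) := by
      rw [eq_div_iff (mul_ne_zero hfa hfb)]
      have := Nat.choose_mul_factorial_mul_factorial (show a + 1 ≤ a + b + 2 by omega)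
      have h2 : a + b + 2 - (a + 1) = b + 1 := by omega
      rw [h2] at this
      rw [← mul_assoc]
      exact_mod_cast congrArg (Nat.cast : ℕ → ℚ) this
    have hc2 : (((2 * (b + 1)).choose 2 : ℕ) : ℚ) = ((b : ℚ) + 1) * (2 * b + 1) := by
      rw [chooseTwo (b + 1)]; push_cast; ring
    have hcbb : cb b = ((b : ℚ) + 1) * cb (b + 1) / (2 * (2 * b + 1)) := by
      rw [eq_div_iff (by positivity : (2 : ℚ) * (2 * b + 1) ≠ 0), mul_comm]
      exact (cb_rec b).symm
    have hfb' : ((b + 1).factorial : ℚ) = ((b : ℚ) + 1) * (b.factorial : ℚ) := by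
      rw [Nat.factorial_succ]; push_cast; ring
    have h2n : ((2 : ℚ)) ^ (a + b + 2) = 2 ^ (a + 1) * 2 ^ b * 2 := by
      rw [show a + b + 2 = (a + 1) + b + 1 by omega, pow_succ, pow_add]
    rw [hd1, hd2, hch, hc2, hcbb, hfb', h2n]
    push_cast
    have hb1 : ((b : ℚ) + 1) ≠ 0 := by positivity
    have h2b1 : (2 * (b : ℚ) + 1) ≠ 0 := by positivity
    have hfb0 : ((b).factorial : ℚ) ≠ 0 := by exact_mod_cast b.factorial_ne_zero
    field_simp

theorem stmt8 (n : ℕ) (hn : 0 < n) :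
    ∑ p ∈ range (n + 1),
        (Nat.choose n p : ℚ) * (2 * p) * Nat.choose (2 * (n - p)) 2 *
          Nat.doubleFactorial (2 * p - 1) * Nat.doubleFactorial (2 * (n - p - 1) - 1)
      = (2 : ℚ) ^ n * n.factorial * (2 * (n : ℚ) * ((n : ℚ) - 1) / 8) := by
  rw [Finset.sum_congr rfl (termEq n)]
  rw [← Finset.mul_sum, ← Fc, Fval n]
  have h4 : ((4 : ℚ)) ^ n = 2 ^ n * 2 ^ n := by
    rw [show (4 : ℚ) = 2 * 2 by norm_num, mul_pow]
  rw [h4]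
  have h2n : ((2 : ℚ)) ^ n ≠ 0 := by positivity
  field_simp
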